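/- arXiv:1203.3391 — 7 statements merged into one kernel-verified Lean document; each statement's English description precedes it below -/
import Mathlib

section
/- Let s ∈ ℝ³ with ‖s‖ < 1, let V and H be 3×3 real symmetric positive definite matrices. Set B = √(V H⁻¹ V) (the positive semidefinite matrix square root), C = B (I − s sᵀ + V⁻¹) B, and let e be a unit eigenvector of C corresponding to its minimal eigenvalue. Then the unit vector a* = B e / ‖B e‖ minimizes the map a ↦ tr[H (V + F(a,s))⁻¹] over all unit vectors a ∈ ℝ³; that is, for every a ∈ ℝ³ with ‖a‖ = 1, tr[H (V + F(a*,s))⁻¹] ≤ tr[H (V + F(a,s))⁻¹]. -/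
open Matrix

/-- Fisher matrix of the projective measurement along Bloch direction `a`
on the qubit state with Bloch vector `s`: `F(a,s) = a aᵀ / (1 - (a·s)²)`. -/
noncomputable def fisherMat (a s : Fin 3 → ℝ) : Matrix (Fin 3) (Fin 3) ℝ :=
  (1 - (a ⬝ᵥ s) ^ 2)⁻¹ • vecMulVec a a

section myhelpers

variable (a b x : Fin 3 → ℝ)

lemma myvmv_mulVec : vecMulVec a b *ᵥ x = (b ⬝ᵥ x) • a := by
  ext i
  simp [mulVec, dotProduct, vecMulVec_apply, Finset.mul_sum, mul_comm, mul_left_comm]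

lemma mymul_vmv (X : Matrix (Fin 3) (Fin 3) ℝ) :
    X * vecMulVec a b = vecMulVec (X *ᵥ a) b := by
  ext i j
  simp [mul_apply, vecMulVec_apply, mulVec, dotProduct, Finset.sum_mul, mul_assoc]

lemma myvmv_smul (c : ℝ) : vecMulVec (c • a) b = c • vecMulVec a b := by
  ext i j; simp [vecMulVec_apply, smul_eq_mul, mul_assoc]

lemma mytrace_vmv : (vecMulVec a b).trace = a ⬝ᵥ b := by
  simp [trace, vecMulVec_apply, dotProduct, diag]

lemma mytrace_mul_vmv (X : Matrix (Fin 3) (Fin 3) ℝ) :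
    (X * vecMulVec a b).trace = b ⬝ᵥ (X *ᵥ a) := by
  rw [mymul_vmv, mytrace_vmv, dotProduct_comm]

lemma myquad (W : Matrix (Fin 3) (Fin 3) ℝ) :
    vecMulVec a a * W * vecMulVec a a = (a ⬝ᵥ (W *ᵥ a)) • vecMulVec a a := by
  rw [mul_assoc, mymul_vmv, mymul_vmv, myvmv_mulVec, myvmv_smul]

lemma mydot_self_pos (hx : x ≠ 0) : 0 < x ⬝ᵥ x := by
  obtain ⟨i, hi⟩ := Function.ne_iff.mp hx
  refine Finset.sum_pos' (fun j _ => mul_self_nonneg _) ⟨i, Finset.mem_univ i, ?_⟩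
  exact mul_self_pos.mpr hi

lemma mydot_mulVec (X : Matrix (Fin 3) (Fin 3) ℝ) :
    (X *ᵥ x) ⬝ᵥ b = x ⬝ᵥ (Xᵀ *ᵥ b) := by
  simp only [dotProduct, mulVec, transpose_apply, Finset.sum_mul, Finset.mul_sum, dotProduct]
  rw [Finset.sum_comm]
  apply Finset.sum_congr rfl
  intro i _
  apply Finset.sum_congr rfl
  intro j _
  ring

lemma myCS : (a ⬝ᵥ b) ^ 2 ≤ (a ⬝ᵥ a) * (b ⬝ᵥ b) := by
  have := Finset.sum_mul_sq_le_sq_mul_sq Finset.univ a b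
  simpa [dotProduct, sq] using this

/-- Sherman–Morrison formula. -/
lemma mySM (V : Matrix (Fin 3) (Fin 3) ℝ) (hV : IsUnit V.det) (c : ℝ)
    (h : 1 + c * (a ⬝ᵥ V⁻¹ *ᵥ a) ≠ 0) :
    (V + c • vecMulVec a a)⁻¹
      = V⁻¹ - (c / (1 + c * (a ⬝ᵥ V⁻¹ *ᵥ a))) • (V⁻¹ * vecMulVec a a * V⁻¹) := by
  set A := vecMulVec a a with hA
  set q := a ⬝ᵥ V⁻¹ *ᵥ a with hq
  set d := c / (1 + c * q) with hd
  rw [show V⁻¹ * A * V⁻¹ = V⁻¹ * (A * V⁻¹) from mul_assoc _ _ _]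
  apply inv_eq_right_inv
  have h1 : V * V⁻¹ = 1 := mul_nonsing_inv V hV
  have hcancel : V * (V⁻¹ * (A * V⁻¹)) = A * V⁻¹ :=
    mul_nonsing_inv_cancel_left V _ hV
  have hAWA : A * (V⁻¹ * (A * V⁻¹)) = q • (A * V⁻¹) := by
    calc A * (V⁻¹ * (A * V⁻¹)) = (A * V⁻¹ * A) * V⁻¹ := by
          simp only [mul_assoc]
      _ = q • (A * V⁻¹) := by rw [myquad, Matrix.smul_mul, hq]
  have hX : c • (A * V⁻¹) - (c * d) • (q • (A * V⁻¹)) = d • (A * V⁻¹) := by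
    rw [smul_smul, ← sub_smul]
    congr 1
    have hd' : d * (1 + c * q) = c := by rw [hd]; exact div_mul_cancel₀ c h
    linear_combination (-1 : ℝ) * hd'
  calc (V + c • A) * (V⁻¹ - d • (V⁻¹ * (A * V⁻¹)))
      = V * V⁻¹ - d • (V * (V⁻¹ * (A * V⁻¹)))
        + (c • (A * V⁻¹) - (c * d) • (A * (V⁻¹ * (A * V⁻¹)))) := by
        simp only [add_mul, mul_sub, Matrix.mul_smul, Matrix.smul_mul, smul_smul, mul_assoc]
        rw [mul_comm d c]; abel
    _ = 1 - d • (A * V⁻¹) + (c • (A * V⁻¹) - (c * d) • (q • (A * V⁻¹))) := by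
        rw [h1, hcancel, hAWA]
    _ = 1 := by rw [hX]; abel

lemma myden (s : Fin 3 → ℝ) (V : Matrix (Fin 3) (Fin 3) ℝ) (ha : a ⬝ᵥ a = 1) :
    a ⬝ᵥ ((1 - vecMulVec s s + V⁻¹) *ᵥ a)
      = (1 - (a ⬝ᵥ s) ^ 2) + a ⬝ᵥ (V⁻¹ *ᵥ a) := by
  rw [add_mulVec, sub_mulVec, one_mulVec, myvmv_mulVec, dotProduct_add, dotProduct_sub,
    dotProduct_smul, ha, dotProduct_comm s a, smul_eq_mul]
  ring

/-- Trace formula via Sherman–Morrison. -/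
lemma myTraceFormula (s : Fin 3 → ℝ) (hss : s ⬝ᵥ s < 1)
    (V H : Matrix (Fin 3) (Fin 3) ℝ) (hV : V.PosDef)
    (ha : a ⬝ᵥ a = 1) :
    (H * (V + fisherMat a s)⁻¹).trace
      = (H * V⁻¹).trace
        - (a ⬝ᵥ ((V⁻¹ * H * V⁻¹) *ᵥ a)) / (a ⬝ᵥ ((1 - vecMulVec s s + V⁻¹) *ᵥ a)) := by
  have hane : a ≠ 0 := by
    intro h0; rw [h0] at ha; simp at ha
  have has2 : (a ⬝ᵥ s) ^ 2 < 1 := by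
    have := myCS a s
    rw [ha, one_mul] at this
    linarith
  have hc : 0 < 1 - (a ⬝ᵥ s) ^ 2 := by linarith
  set c : ℝ := (1 - (a ⬝ᵥ s) ^ 2)⁻¹ with hcdef
  have hcpos : 0 < c := inv_pos.mpr hc
  have hq : 0 < a ⬝ᵥ (V⁻¹ *ᵥ a) := by
    have := hV.inv.dotProduct_mulVec_pos hane
    simpa using this
  set q := a ⬝ᵥ (V⁻¹ *ᵥ a) with hqdef
  have hden : 1 + c * q ≠ 0 := by positivity
  have hVd : IsUnit V.det := isUnit_iff_ne_zero.mpr (ne_of_gt hV.det_pos)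
  have hSM := mySM a V hVd c hden
  rw [show fisherMat a s = c • vecMulVec a a from rfl, hSM]
  rw [mul_sub, Matrix.mul_smul, trace_sub, trace_smul]
  have htr : (H * (V⁻¹ * vecMulVec a a * V⁻¹)).trace
      = a ⬝ᵥ ((V⁻¹ * H * V⁻¹) *ᵥ a) := by
    calc (H * (V⁻¹ * vecMulVec a a * V⁻¹)).trace
        = ((H * V⁻¹ * vecMulVec a a) * V⁻¹).trace := by
          rw [← mul_assoc, ← mul_assoc]
      _ = (V⁻¹ * (H * V⁻¹ * vecMulVec a a)).trace := by rw [trace_mul_comm]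
      _ = ((V⁻¹ * H * V⁻¹) * vecMulVec a a).trace := by
          rw [← mul_assoc, ← mul_assoc]
      _ = a ⬝ᵥ ((V⁻¹ * H * V⁻¹) *ᵥ a) := mytrace_mul_vmv a a _
  have key : ∀ m p r : ℝ, 0 < p → 0 < r → p⁻¹ / (1 + p⁻¹ * r) * m = m / (p + r) := by
    intro m p r hp hr
    rw [div_mul_eq_mul_div, div_eq_div_iff]
    · field_simp
    · positivity
    · positivity
  rw [htr, myden a s V ha, smul_eq_mul, ← hqdef, hcdef]
  rw [key _ _ _ hc hq]

end myhelpers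

/-- A-optimality: the analytic minimizer of `a ↦ tr[H (V + F(a,s))⁻¹]`
over unit vectors `a` is `B e / ‖B e‖`, where `B = √(V H⁻¹ V)`,
`C = B (I - s sᵀ + V⁻¹) B`, and `e` is a unit eigenvector of `C`
for its minimal eigenvalue. -/
theorem aOptimal_minimizer
    (s : Fin 3 → ℝ) (hs : Real.sqrt (s ⬝ᵥ s) < 1)
    (V H : Matrix (Fin 3) (Fin 3) ℝ)
    (hV : V.PosDef) (hVsymm : V.IsSymm) (hH : H.PosDef) (hHsymm : H.IsSymm)
    (B : Matrix (Fin 3) (Fin 3) ℝ) (hBpsd : B.PosSemidef)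
    (hBsq : B * B = V * H⁻¹ * V)
    (C : Matrix (Fin 3) (Fin 3) ℝ)
    (hC : C = B * (1 - vecMulVec s s + V⁻¹) * B)
    (e : Fin 3 → ℝ) (he : e ⬝ᵥ e = 1) (lam : ℝ)
    (heig : C *ᵥ e = lam • e)
    (hmin : ∀ (μ : ℝ) (v : Fin 3 → ℝ), v ≠ 0 → C *ᵥ v = μ • v → lam ≤ μ)
    (astar : Fin 3 → ℝ)
    (hastar : astar = (Real.sqrt ((B *ᵥ e) ⬝ᵥ (B *ᵥ e)))⁻¹ • (B *ᵥ e)) :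
    ∀ a : Fin 3 → ℝ, a ⬝ᵥ a = 1 →
      (H * (V + fisherMat astar s)⁻¹).trace ≤ (H * (V + fisherMat a s)⁻¹).trace := by
  intro a ha
  -- basic facts
  have hssnn : 0 ≤ s ⬝ᵥ s := Finset.sum_nonneg fun i _ => mul_self_nonneg _
  have hss : s ⬝ᵥ s < 1 := by
    nlinarith [Real.sq_sqrt hssnn, Real.sqrt_nonneg (s ⬝ᵥ s)]
  have hVd : IsUnit V.det := isUnit_iff_ne_zero.mpr (ne_of_gt hV.det_pos)
  have hHd : IsUnit H.det := isUnit_iff_ne_zero.mpr (ne_of_gt hH.det_pos)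
  have hBsymm : Bᵀ = B := by
    have h1 := hBpsd.1
    rwa [Matrix.IsHermitian, conjTranspose_eq_transpose_of_trivial] at h1
  have hBd : IsUnit B.det := by
    have hdet : B.det * B.det = V.det * H⁻¹.det * V.det := by
      rw [← det_mul, ← det_mul, ← det_mul, hBsq]
    have hpos : 0 < V.det * H⁻¹.det * V.det := by
      have := hV.det_pos; have := hH.inv.det_pos; positivity
    rw [isUnit_iff_ne_zero]
    intro h0
    rw [h0, mul_zero] at hdet
    rw [← hdet] at hpos
    exact lt_irrefl _ hpos
  have hBinv : B⁻¹ * B = 1 := nonsing_inv_mul B hBd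
  have hBinv' : B * B⁻¹ = 1 := mul_nonsing_inv B hBd
  set M := V⁻¹ * H * V⁻¹ with hM
  have hMBB : B * M * B = 1 := by
    have h1 : (B * B)⁻¹ = M := by
      rw [hBsq, Matrix.mul_inv_rev, Matrix.mul_inv_rev,
        nonsing_inv_nonsing_inv H hHd, hM, mul_assoc]
    rw [← h1, Matrix.mul_inv_rev]
    simp only [mul_assoc]
    rw [hBinv, mul_one, hBinv']
  set D := 1 - vecMulVec s s + V⁻¹ with hD
  have hDt : Dᵀ = D := by
    have hsst : (vecMulVec s s)ᵀ = vecMulVec s s := by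
      ext i j; simp [vecMulVec_apply, transpose_apply, mul_comm]
    rw [hD, transpose_add, transpose_sub, transpose_one, hsst, transpose_nonsing_inv, hVsymm]
  have hDpos : D.PosDef := by
    refine Matrix.PosDef.of_dotProduct_mulVec_pos ?_ ?_
    · rw [Matrix.IsHermitian, conjTranspose_eq_transpose_of_trivial, hDt]
    · intro x hx
      have hxx := mydot_self_pos x hx
      have hq := hV.inv.dotProduct_mulVec_pos hx
      rw [star_trivial] at hq
      have hcs := myCS x s
      rw [star_trivial, hD, add_mulVec, sub_mulVec, one_mulVec, myvmv_mulVec, dotProduct_add,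
        dotProduct_sub, dotProduct_smul, smul_eq_mul, dotProduct_comm s x]
      nlinarith [mul_pos hxx (show (0:ℝ) < 1 - s ⬝ᵥ s by linarith)]
  -- Rayleigh inequality from the minimal eigenvalue hypothesis
  have hCh : C.IsHermitian := by
    rw [Matrix.IsHermitian, conjTranspose_eq_transpose_of_trivial, hC]
    rw [transpose_mul, transpose_mul, hBsymm, hDt]
    simp only [mul_assoc]
  have hRay : ∀ x : Fin 3 → ℝ, lam * (x ⬝ᵥ x) ≤ x ⬝ᵥ (C *ᵥ x) := by
    set A := C - lam • (1 : Matrix (Fin 3) (Fin 3) ℝ) with hA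
    have hAh : A.IsHermitian := by
      rw [Matrix.IsHermitian, hA, conjTranspose_sub, conjTranspose_smul, conjTranspose_one,
        hCh.eq]
      norm_num
    have heignn : ∀ j, 0 ≤ hAh.eigenvalues j := by
      intro j
      set v : Fin 3 → ℝ := ⇑(hAh.eigenvectorBasis j) with hv
      have hvne : v ≠ 0 := by
        have h1 := hAh.eigenvectorBasis.orthonormal.ne_zero j
        intro h0
        apply h1
        ext i
        exact congrFun h0 i
      have hAv := hAh.mulVec_eigenvectorBasis j
      have hCv : C *ᵥ v = (hAh.eigenvalues j + lam) • v := by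
        have h2 : A *ᵥ v = C *ᵥ v - lam • v := by
          rw [hA, sub_mulVec, smul_mulVec, one_mulVec]
        rw [← hv] at hAv
        rw [h2] at hAv
        rw [add_smul]
        rw [sub_eq_iff_eq_add] at hAv
        rw [hAv]
      have := hmin _ v hvne hCv
      linarith
    have hApsd := hAh.posSemidef_iff_eigenvalues_nonneg.mpr heignn
    intro x
    have h0 := hApsd.dotProduct_mulVec_nonneg x
    rw [star_trivial, hA, sub_mulVec, dotProduct_sub, smul_mulVec, one_mulVec,
      dotProduct_smul, smul_eq_mul] at h0
    linarith
  -- change of variables through B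
  have he0 : e ≠ 0 := by
    intro h0; rw [h0] at he; simp at he
  have hBe_ne : B *ᵥ e ≠ 0 := by
    intro h0
    apply he0
    have h1 : B⁻¹ *ᵥ (B *ᵥ e) = e := by
      rw [mulVec_mulVec, hBinv, one_mulVec]
    rw [h0, mulVec_zero] at h1
    exact h1.symm
  have hBMB_dot : ∀ y : Fin 3 → ℝ, (B *ᵥ y) ⬝ᵥ (M *ᵥ (B *ᵥ y)) = y ⬝ᵥ y := by
    intro y
    rw [mydot_mulVec, hBsymm, mulVec_mulVec, mulVec_mulVec, hMBB, one_mulVec]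
  have hBDB_dot : ∀ y : Fin 3 → ℝ, (B *ᵥ y) ⬝ᵥ (D *ᵥ (B *ᵥ y)) = y ⬝ᵥ (C *ᵥ y) := by
    intro y
    rw [mydot_mulVec, hBsymm, mulVec_mulVec, mulVec_mulVec, ← hC]
  have hlam_eq : e ⬝ᵥ (C *ᵥ e) = lam := by
    rw [heig, dotProduct_smul, he, smul_eq_mul, mul_one]
  have hlam_pos : 0 < lam := by
    have h1 := hDpos.dotProduct_mulVec_pos hBe_ne
    rw [star_trivial, hBDB_dot, hlam_eq] at h1
    exact h1
  -- properties of astar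
  set r := Real.sqrt ((B *ᵥ e) ⬝ᵥ (B *ᵥ e)) with hr
  have hBe_pos : 0 < (B *ᵥ e) ⬝ᵥ (B *ᵥ e) := mydot_self_pos _ hBe_ne
  have hrpos : 0 < r := Real.sqrt_pos.mpr hBe_pos
  have hr2 : r * r = (B *ᵥ e) ⬝ᵥ (B *ᵥ e) := Real.mul_self_sqrt hBe_pos.le
  have hastar_dot : astar ⬝ᵥ astar = 1 := by
    rw [hastar, smul_dotProduct, dotProduct_smul, smul_eq_mul, smul_eq_mul, ← hr2]
    field_simp
  have hmstar : astar ⬝ᵥ (M *ᵥ astar) = r⁻¹ * r⁻¹ := by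
    rw [hastar, mulVec_smul, smul_dotProduct, dotProduct_smul, smul_eq_mul, smul_eq_mul,
      hBMB_dot, he, mul_one]
  have hdstar : astar ⬝ᵥ (D *ᵥ astar) = r⁻¹ * r⁻¹ * lam := by
    rw [hastar, mulVec_smul, smul_dotProduct, dotProduct_smul, smul_eq_mul, smul_eq_mul,
      hBDB_dot, hlam_eq]
    ring
  -- the two trace formulas
  have hTa := myTraceFormula a s hss V H hV ha
  have hTs := myTraceFormula astar s hss V H hV hastar_dot
  rw [← hM, ← hD] at hTa hTs
  -- the key inequality
  have hane : a ≠ 0 := by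
    intro h0; rw [h0] at ha; simp at ha
  have hden_a : 0 < a ⬝ᵥ (D *ᵥ a) := by
    have h1 := hDpos.dotProduct_mulVec_pos hane
    rwa [star_trivial] at h1
  have hma : a ⬝ᵥ (M *ᵥ a) = (B⁻¹ *ᵥ a) ⬝ᵥ (B⁻¹ *ᵥ a) := by
    have hBx : B *ᵥ (B⁻¹ *ᵥ a) = a := by
      rw [mulVec_mulVec, hBinv', one_mulVec]
    conv_lhs => rw [← hBx]
    rw [hBMB_dot]
  have hda : a ⬝ᵥ (D *ᵥ a) = (B⁻¹ *ᵥ a) ⬝ᵥ (C *ᵥ (B⁻¹ *ᵥ a)) := by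
    have hBx : B *ᵥ (B⁻¹ *ᵥ a) = a := by
      rw [mulVec_mulVec, hBinv', one_mulVec]
    conv_lhs => rw [← hBx]
    rw [hBDB_dot]
  have hineq : lam * (a ⬝ᵥ (M *ᵥ a)) ≤ a ⬝ᵥ (D *ᵥ a) := by
    rw [hma, hda]
    exact hRay _
  -- conclude
  rw [hTa, hTs, hmstar, hdstar]
  have hratio : r⁻¹ * r⁻¹ / (r⁻¹ * r⁻¹ * lam) = 1 / lam := by
    rw [div_eq_div_iff (by positivity) hlam_pos.ne']
    ring
  rw [hratio]
  apply sub_le_sub_left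
  rw [div_le_div_iff₀ hden_a hlam_pos]
  rw [one_mul, mul_comm]
  exact hineq
end

section
/- For every k×k real symmetric positive semidefinite matrix H, if F is invertible then tr[H E] ≥ tr[H Gᵀ F⁻¹ G] (the weighted-trace generalized Cramér–Rao inequality). -/
open Matrix

private lemma dot_sum_vecMulVec {n Y : Type*} [Fintype n] [Fintype Y]
    (c : Y → ℝ) (a b : Y → n → ℝ) (x z : n → ℝ) :
    x ⬝ᵥ (∑ y, c y • vecMulVec (a y) (b y)) *ᵥ z
      = ∑ y, c y * ((x ⬝ᵥ a y) * (b y ⬝ᵥ z)) := by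
  simp only [dotProduct, mulVec, vecMulVec_apply, Matrix.sum_apply, Pi.smul_apply,
    Matrix.smul_apply, smul_eq_mul, Finset.sum_mul, Finset.mul_sum]
  refine Eq.trans (Finset.sum_congr rfl fun j _ => Finset.sum_comm) ?_
  refine Eq.trans Finset.sum_comm ?_
  refine Finset.sum_congr rfl fun y _ => Eq.trans Finset.sum_comm ?_
  refine Finset.sum_congr rfl fun j _ => Finset.sum_congr rfl fun i _ => by ring

private lemma psd_trace_nonneg {n : Type*} [Fintype n] [DecidableEq n] {M : Matrix n n ℝ}
    (hM : M.PosSemidef) : 0 ≤ M.trace := by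
  rw [Matrix.trace]
  refine Finset.sum_nonneg fun i _ => ?_
  have := hM.dotProduct_mulVec_nonneg (Pi.single i 1)
  simpa [dotProduct, mulVec, Pi.single_apply, Finset.sum_ite_eq, Matrix.diag] using this

open scoped MatrixOrder in
private lemma psd_trace_mul_nonneg {n : Type*} [Fintype n] [DecidableEq n]
    {A B : Matrix n n ℝ} (hA : A.PosSemidef) (hB : B.PosSemidef) :
    0 ≤ (A * B).trace := by
  obtain ⟨C, rfl⟩ := CStarAlgebra.nonneg_iff_eq_star_mul_self.mp hA.nonneg
  rw [star_eq_conjTranspose, Matrix.mul_assoc, trace_mul_comm]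
  exact psd_trace_nonneg (hB.mul_mul_conjTranspose_same C)

/-- Weighted-trace generalized Cramér–Rao inequality:
`tr[H E] ≥ tr[H Gᵀ F⁻¹ G]` for positive semidefinite `H`. -/
theorem generalized_cramer_rao_trace
    {k : ℕ} {Y : Type*} [Fintype Y]
    (θ₀ : Fin k → ℝ) (p : (Fin k → ℝ) → Y → ℝ) (t : Y → Fin k → ℝ)
    (hpos : ∀ y, 0 < p θ₀ y)
    (hsum : ∀ θ, ∑ y, p θ y = 1)
    (hdiff : ∀ y, DifferentiableAt ℝ (fun θ => p θ y) θ₀)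
    (s : Y → Fin k → ℝ)
    (hs : ∀ y i, s y i = (p θ₀ y)⁻¹ * fderiv ℝ (fun θ => p θ y) θ₀ (Pi.single i 1))
    (E F G : Matrix (Fin k) (Fin k) ℝ)
    (hE : E = ∑ y, p θ₀ y • vecMulVec (t y - θ₀) (t y - θ₀))
    (hF : F = ∑ y, p θ₀ y • vecMulVec (s y) (s y))
    (hG : G = ∑ y, p θ₀ y • vecMulVec (s y) (t y - θ₀))
    (hFinv : IsUnit F)
    (H : Matrix (Fin k) (Fin k) ℝ) (hH : H.PosSemidef) :
    (H * (Gᵀ * F⁻¹ * G)).trace ≤ (H * E).trace := by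
  have hdet : IsUnit F.det := (Matrix.isUnit_iff_isUnit_det F).mp hFinv
  have hFF : F * F⁻¹ = 1 := Matrix.mul_nonsing_inv F hdet
  -- F is symmetric
  have hFsym : Fᵀ = F := by
    subst hF
    rw [transpose_sum]
    congr 1; funext y
    rw [transpose_smul]
    congr 1
    ext i j
    simp [vecMulVec_apply, mul_comm]
  have hFinvSym : F⁻¹ᵀ = F⁻¹ := by
    rw [transpose_nonsing_inv, hFsym]
  -- M := E - Gᵀ F⁻¹ G is positive semidefinite
  set M : Matrix (Fin k) (Fin k) ℝ := E - Gᵀ * F⁻¹ * G with hM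
  have hEsym : Eᵀ = E := by
    subst hE
    rw [transpose_sum]
    congr 1; funext y
    rw [transpose_smul]
    congr 1
    ext i j
    simp [vecMulVec_apply, mul_comm]
  have hMpsd : M.PosSemidef := by
    refine PosSemidef.of_dotProduct_mulVec_nonneg ?_ ?_
    · show Mᴴ = M
      have : (Gᵀ * F⁻¹ * G)ᵀ = Gᵀ * F⁻¹ * G := by
        rw [transpose_mul, transpose_mul, transpose_transpose, hFinvSym, Matrix.mul_assoc]
      simp only [hM, conjTranspose_sub]
      rw [show Eᴴ = Eᵀ from rfl, show (Gᵀ * F⁻¹ * G)ᴴ = (Gᵀ * F⁻¹ * G)ᵀ from rfl, hEsym, this]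
    · intro x
      have hstar : star x = x := rfl
      set w : Fin k → ℝ := F⁻¹ *ᵥ (G *ᵥ x) with hw
      have hFw : F *ᵥ w = G *ᵥ x := by
        rw [hw, mulVec_mulVec, hFF, one_mulVec]
      have hGterm : x ⬝ᵥ (Gᵀ * F⁻¹ * G) *ᵥ x = w ⬝ᵥ (G *ᵥ x) := by
        rw [Matrix.mul_assoc, ← mulVec_mulVec, ← mulVec_mulVec, ← hw]
        rw [mulVec_transpose, dotProduct_comm, ← dotProduct_mulVec]
      have hEterm : x ⬝ᵥ E *ᵥ x = ∑ y, p θ₀ y * ((t y - θ₀) ⬝ᵥ x) ^ 2 := by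
        rw [hE, dot_sum_vecMulVec]
        congr 1; funext y
        rw [dotProduct_comm x (t y - θ₀)]; ring
      have hFterm : w ⬝ᵥ (G *ᵥ x) = ∑ y, p θ₀ y * (s y ⬝ᵥ w) * ((t y - θ₀) ⬝ᵥ x) := by
        rw [hG, dot_sum_vecMulVec]
        congr 1; funext y
        rw [dotProduct_comm w (s y)]; ring
      have hWW : w ⬝ᵥ F *ᵥ w = ∑ y, p θ₀ y * (s y ⬝ᵥ w) ^ 2 := by
        rw [hF, dot_sum_vecMulVec]
        congr 1; funext y
        rw [dotProduct_comm w (s y)]; ring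
      have key : 0 ≤ ∑ y, p θ₀ y * ((t y - θ₀) ⬝ᵥ x - s y ⬝ᵥ w) ^ 2 :=
        Finset.sum_nonneg fun y _ => mul_nonneg (hpos y).le (sq_nonneg _)
      have expand : ∑ y, p θ₀ y * ((t y - θ₀) ⬝ᵥ x - s y ⬝ᵥ w) ^ 2
          = (∑ y, p θ₀ y * ((t y - θ₀) ⬝ᵥ x) ^ 2)
            - 2 * (∑ y, p θ₀ y * (s y ⬝ᵥ w) * ((t y - θ₀) ⬝ᵥ x))
            + ∑ y, p θ₀ y * (s y ⬝ᵥ w) ^ 2 := by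
        rw [Finset.mul_sum, ← Finset.sum_sub_distrib, ← Finset.sum_add_distrib]
        congr 1; funext y; ring
      have hFwdot : w ⬝ᵥ F *ᵥ w = w ⬝ᵥ (G *ᵥ x) := by rw [hFw]
      have : 0 ≤ x ⬝ᵥ E *ᵥ x - x ⬝ᵥ (Gᵀ * F⁻¹ * G) *ᵥ x := by
        rw [hEterm, hGterm, hFterm]
        calc 0 ≤ ∑ y, p θ₀ y * ((t y - θ₀) ⬝ᵥ x - s y ⬝ᵥ w) ^ 2 := key
        _ = (∑ y, p θ₀ y * ((t y - θ₀) ⬝ᵥ x) ^ 2)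
            - 2 * (∑ y, p θ₀ y * (s y ⬝ᵥ w) * ((t y - θ₀) ⬝ᵥ x))
            + ∑ y, p θ₀ y * (s y ⬝ᵥ w) ^ 2 := expand
        _ = (∑ y, p θ₀ y * ((t y - θ₀) ⬝ᵥ x) ^ 2)
            - ∑ y, p θ₀ y * (s y ⬝ᵥ w) * ((t y - θ₀) ⬝ᵥ x) := by
          have : ∑ y, p θ₀ y * (s y ⬝ᵥ w) ^ 2
              = ∑ y, p θ₀ y * (s y ⬝ᵥ w) * ((t y - θ₀) ⬝ᵥ x) := by
            rw [← hWW, ← hFterm, hFwdot]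
          rw [this]; ring
      have hMx : x ⬝ᵥ M *ᵥ x = x ⬝ᵥ E *ᵥ x - x ⬝ᵥ (Gᵀ * F⁻¹ * G) *ᵥ x := by
        rw [hM, sub_mulVec, dotProduct_sub]
      rw [hstar, hMx]
      exact this
  -- conclude via trace
  have htr : (H * E).trace - (H * (Gᵀ * F⁻¹ * G)).trace = (H * M).trace := by
    rw [hM, Matrix.mul_sub, trace_sub]
  have := psd_trace_mul_nonneg hH hMpsd
  linarith [htr ▸ this]
end

section
/- If the matrix G equals the k×k identity matrix (as happens for an unbiased estimator) and F is invertible, then E − F⁻¹ is positive semidefinite; that is, the standard Cramér–Rao inequality E ≥ F⁻¹ holds. -/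
open Matrix

lemma quad_vecMulVec {k : ℕ} (v w x : Fin k → ℝ) :
    x ⬝ᵥ (vecMulVec v w) *ᵥ x = (v ⬝ᵥ x) * (w ⬝ᵥ x) := by
  simp only [dotProduct, mulVec, vecMulVec_apply, Finset.mul_sum, Finset.sum_mul]
  rw [Finset.sum_comm]
  exact Finset.sum_congr rfl fun i _ => Finset.sum_congr rfl fun j _ => by ring

lemma quad_sum {k : ℕ} {Y : Type*} [Fintype Y] (c : Y → ℝ) (v w : Y → Fin k → ℝ)
    (x x' : Fin k → ℝ) :
    x ⬝ᵥ (∑ y, c y • vecMulVec (v y) (w y)) *ᵥ x'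
      = ∑ y, c y * ((v y ⬝ᵥ x) * (w y ⬝ᵥ x')) := by
  simp only [dotProduct, mulVec, Matrix.sum_apply, Matrix.smul_apply, vecMulVec_apply,
    smul_eq_mul, Finset.mul_sum, Finset.sum_mul]
  conv_lhs => rw [Finset.sum_congr rfl fun i1 _ => Finset.sum_comm]
  rw [Finset.sum_comm]
  refine Finset.sum_congr rfl fun y _ => ?_
  rw [Finset.sum_comm]
  exact Finset.sum_congr rfl fun i _ => Finset.sum_congr rfl fun j _ => by ring

lemma transpose_vecMulVec' {k : ℕ} (v w : Fin k → ℝ) :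
    (vecMulVec v w)ᵀ = vecMulVec w v := by
  ext i j
  simp [vecMulVec_apply, mul_comm]

/-- Standard Cramér–Rao inequality: if `G = I` (unbiased estimator)
then `E ≥ F⁻¹`. -/
theorem cramer_rao_unbiased
    {k : ℕ} {Y : Type*} [Fintype Y]
    (θ₀ : Fin k → ℝ) (p : (Fin k → ℝ) → Y → ℝ) (t : Y → Fin k → ℝ)
    (hpos : ∀ y, 0 < p θ₀ y)
    (hsum : ∀ θ, ∑ y, p θ y = 1)
    (hdiff : ∀ y, DifferentiableAt ℝ (fun θ => p θ y) θ₀)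
    (s : Y → Fin k → ℝ)
    (hs : ∀ y i, s y i = (p θ₀ y)⁻¹ * fderiv ℝ (fun θ => p θ y) θ₀ (Pi.single i 1))
    (E F G : Matrix (Fin k) (Fin k) ℝ)
    (hE : E = ∑ y, p θ₀ y • vecMulVec (t y - θ₀) (t y - θ₀))
    (hF : F = ∑ y, p θ₀ y • vecMulVec (s y) (s y))
    (hG : G = ∑ y, p θ₀ y • vecMulVec (s y) (t y - θ₀))
    (hGid : G = 1)
    (hFinv : IsUnit F) :
    (E - F⁻¹).PosSemidef := by
  have hEsym : E.IsHermitian := by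
    rw [hE]
    unfold Matrix.IsHermitian
    rw [conjTranspose_eq_transpose_of_trivial, transpose_sum]
    refine Finset.sum_congr rfl fun y _ => ?_
    rw [transpose_smul, transpose_vecMulVec']
  have hFsym : F.IsHermitian := by
    rw [hF]
    unfold Matrix.IsHermitian
    rw [conjTranspose_eq_transpose_of_trivial, transpose_sum]
    refine Finset.sum_congr rfl fun y _ => ?_
    rw [transpose_smul, transpose_vecMulVec']
  rw [posSemidef_iff_dotProduct_mulVec]
  constructor
  · exact hEsym.sub hFsym.inv
  · intro x
    have hstar : star x = x := rfl
    rw [hstar]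
    set u : Fin k → ℝ := F⁻¹ *ᵥ x with hu
    have hFu : F *ᵥ u = x := by
      rw [hu, mulVec_mulVec, mul_nonsing_inv F ((Matrix.isUnit_iff_isUnit_det F).mp hFinv), one_mulVec]
    -- quadratic form values
    have hqE : x ⬝ᵥ E *ᵥ x = ∑ y, p θ₀ y * ((t y - θ₀) ⬝ᵥ x) ^ 2 := by
      rw [hE, quad_sum]
      exact Finset.sum_congr rfl fun y _ => by ring
    have hqF : u ⬝ᵥ F *ᵥ u = ∑ y, p θ₀ y * (s y ⬝ᵥ u) ^ 2 := by
      rw [hF, quad_sum]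
      exact Finset.sum_congr rfl fun y _ => by ring
    have hqG : u ⬝ᵥ G *ᵥ x = ∑ y, p θ₀ y * ((s y ⬝ᵥ u) * ((t y - θ₀) ⬝ᵥ x)) := by
      rw [hG, quad_sum]
    set c : ℝ := u ⬝ᵥ x with hc
    have hcs : c = ∑ y, p θ₀ y * ((s y ⬝ᵥ u) * ((t y - θ₀) ⬝ᵥ x)) := by
      rw [← hqG, hGid, one_mulVec]
    have hcF : u ⬝ᵥ F *ᵥ u = c := by rw [hFu]
    have hcnn : 0 ≤ c := by
      rw [← hcF, hqF]
      exact Finset.sum_nonneg fun y _ => mul_nonneg (hpos y).le (sq_nonneg _)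
    have hEnn : 0 ≤ x ⬝ᵥ E *ᵥ x := by
      rw [hqE]
      exact Finset.sum_nonneg fun y _ => mul_nonneg (hpos y).le (sq_nonneg _)
    -- Cauchy-Schwarz
    have hCS : c ^ 2 ≤ c * (x ⬝ᵥ E *ᵥ x) := by
      have := Finset.sum_mul_sq_le_sq_mul_sq Finset.univ
        (fun y => Real.sqrt (p θ₀ y) * (s y ⬝ᵥ u))
        (fun y => Real.sqrt (p θ₀ y) * ((t y - θ₀) ⬝ᵥ x))
      calc c ^ 2 = (∑ y, (Real.sqrt (p θ₀ y) * (s y ⬝ᵥ u)) *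
              (Real.sqrt (p θ₀ y) * ((t y - θ₀) ⬝ᵥ x))) ^ 2 := by
            rw [hcs]
            congr 1
            refine Finset.sum_congr rfl fun y _ => ?_
            rw [show Real.sqrt (p θ₀ y) * (s y ⬝ᵥ u) *
                (Real.sqrt (p θ₀ y) * ((t y - θ₀) ⬝ᵥ x))
              = (Real.sqrt (p θ₀ y) * Real.sqrt (p θ₀ y)) *
                ((s y ⬝ᵥ u) * ((t y - θ₀) ⬝ᵥ x)) by ring,
              Real.mul_self_sqrt (hpos y).le]
        _ ≤ (∑ y, (Real.sqrt (p θ₀ y) * (s y ⬝ᵥ u)) ^ 2) *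
              ∑ y, (Real.sqrt (p θ₀ y) * ((t y - θ₀) ⬝ᵥ x)) ^ 2 := this
        _ = c * (x ⬝ᵥ E *ᵥ x) := by
            rw [← hcF, hqF, hqE]
            congr 1 <;>
            · refine Finset.sum_congr rfl fun y _ => ?_
              rw [mul_pow, Real.sq_sqrt (hpos y).le]
    have hxFinvx : x ⬝ᵥ F⁻¹ *ᵥ x = c := by
      rw [hc, hu, dotProduct_comm]
    have hgoal : x ⬝ᵥ F⁻¹ *ᵥ x ≤ x ⬝ᵥ E *ᵥ x := by
      rw [hxFinvx]
      rcases eq_or_lt_of_le hcnn with h | h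
      · rw [← h]; exact hEnn
      · nlinarith [hCS]
    have : x ⬝ᵥ (E - F⁻¹) *ᵥ x = x ⬝ᵥ E *ᵥ x - x ⬝ᵥ F⁻¹ *ᵥ x := by
      rw [sub_mulVec, dotProduct_sub]
    rw [this]
    linarith
end

section
/- For all vectors u, w ∈ ℝᵏ, the inequality (uᵀ G w)² ≤ (uᵀ F u)(wᵀ E w) holds. -/
open Matrix

lemma cramer_rao_aux {k : ℕ} (a b u w : Fin k → ℝ) (c : ℝ) :
    u ⬝ᵥ ((c • vecMulVec a b) *ᵥ w) = c * ((u ⬝ᵥ a) * (b ⬝ᵥ w)) := by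
  simp [vecMulVec_apply, mulVec, dotProduct, Finset.mul_sum, Finset.sum_mul]
  rw [Finset.sum_comm]
  congr 1; ext i; congr 1; ext j; ring


lemma cramer_rao_sum_mulVec {k : ℕ} {Y : Type*} [Fintype Y]
    (M : Y → Matrix (Fin k) (Fin k) ℝ) (w : Fin k → ℝ) :
    (∑ y, M y) *ᵥ w = ∑ y, M y *ᵥ w := by
  ext i
  simp [mulVec, dotProduct, Matrix.sum_apply, Finset.sum_mul]
  rw [Finset.sum_comm]


lemma dotProduct_sum' {k : ℕ} {Y : Type*} [Fintype Y]
    (u : Fin k → ℝ) (v : Y → Fin k → ℝ) :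
    u ⬝ᵥ (∑ y, v y) = ∑ y, u ⬝ᵥ v y := by
  simp [dotProduct, Finset.sum_apply, Finset.mul_sum]
  exact Finset.sum_comm

/-- The Cauchy–Schwarz-type inequality at the heart of the generalized
Cramér–Rao bound: `(uᵀ G w)² ≤ (uᵀ F u)(wᵀ E w)` for all `u, w`. -/
theorem cramer_rao_cauchy_schwarz
    {k : ℕ} {Y : Type*} [Fintype Y]
    (θ₀ : Fin k → ℝ) (p : (Fin k → ℝ) → Y → ℝ) (t : Y → Fin k → ℝ)
    (hpos : ∀ y, 0 < p θ₀ y)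
    (hsum : ∀ θ, ∑ y, p θ y = 1)
    (hdiff : ∀ y, DifferentiableAt ℝ (fun θ => p θ y) θ₀)
    (s : Y → Fin k → ℝ)
    (hs : ∀ y i, s y i = (p θ₀ y)⁻¹ * fderiv ℝ (fun θ => p θ y) θ₀ (Pi.single i 1))
    (E F G : Matrix (Fin k) (Fin k) ℝ)
    (hE : E = ∑ y, p θ₀ y • vecMulVec (t y - θ₀) (t y - θ₀))
    (hF : F = ∑ y, p θ₀ y • vecMulVec (s y) (s y))
    (hG : G = ∑ y, p θ₀ y • vecMulVec (s y) (t y - θ₀)) :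
    ∀ u w : Fin k → ℝ, (u ⬝ᵥ (G *ᵥ w)) ^ 2 ≤ (u ⬝ᵥ (F *ᵥ u)) * (w ⬝ᵥ (E *ᵥ w)) := by
  intro u w
  set f : Y → ℝ := fun y => Real.sqrt (p θ₀ y) * (u ⬝ᵥ s y) with hf
  set g : Y → ℝ := fun y => Real.sqrt (p θ₀ y) * ((t y - θ₀) ⬝ᵥ w) with hg
  have hq : ∀ y, Real.sqrt (p θ₀ y) * Real.sqrt (p θ₀ y) = p θ₀ y := fun y =>
    Real.mul_self_sqrt (hpos y).le
  have h1 : u ⬝ᵥ (G *ᵥ w) = ∑ y, f y * g y := by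
    rw [hG, cramer_rao_sum_mulVec]
    rw [dotProduct_sum']
    refine Finset.sum_congr rfl fun y _ => ?_
    rw [cramer_rao_aux, hf, hg]
    simp only
    rw [mul_mul_mul_comm, hq y]
  have h2 : u ⬝ᵥ (F *ᵥ u) = ∑ y, f y ^ 2 := by
    rw [hF, cramer_rao_sum_mulVec]
    rw [dotProduct_sum']
    refine Finset.sum_congr rfl fun y _ => ?_
    rw [cramer_rao_aux, hf]
    simp only
    rw [mul_pow, Real.sq_sqrt (hpos y).le, dotProduct_comm (s y) u, ← sq]
  have h3 : w ⬝ᵥ (E *ᵥ w) = ∑ y, g y ^ 2 := by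
    rw [hE, cramer_rao_sum_mulVec]
    rw [dotProduct_sum']
    refine Finset.sum_congr rfl fun y _ => ?_
    rw [cramer_rao_aux, hg]
    simp only
    rw [mul_pow, Real.sq_sqrt (hpos y).le, dotProduct_comm w (t y - θ₀), ← sq]
  rw [h1, h2, h3]
  exact Finset.sum_mul_sq_le_sq_mul_sq _ _ _
end

section
/- Let s ∈ ℝ³ with ‖s‖ < 1, and let V and H be 3×3 real symmetric positive definite matrices. For unit vectors a, a' ∈ ℝ³, one has tr[H (V + F(a,s))⁻¹] ≤ tr[H (V + F(a',s))⁻¹] if and only if (aᵀ (I − s sᵀ + V⁻¹) a) / (aᵀ V⁻¹ H V⁻¹ a) ≤ (a'ᵀ (I − s sᵀ + V⁻¹) a') / (a'ᵀ V⁻¹ H V⁻¹ a'). In particular, minimizing a ↦ tr[H (V + F(a,s))⁻¹] over the unit sphere is equivalent to minimizing the Rayleigh-type quotient aᵀ (I − s sᵀ + V⁻¹) a / (aᵀ V⁻¹ H V⁻¹ a). -/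
open Matrix

lemma aux_trace (M : Matrix (Fin 3) (Fin 3) ℝ) (a : Fin 3 → ℝ) :
    (M * vecMulVec a a).trace = a ⬝ᵥ M *ᵥ a := by
  simp [Matrix.trace, Matrix.mul_apply, vecMulVec_apply, dotProduct, mulVec,
    Matrix.diag, Fin.sum_univ_three]
  ring

lemma aux_PMP (M : Matrix (Fin 3) (Fin 3) ℝ) (a : Fin 3 → ℝ) :
    vecMulVec a a * M * vecMulVec a a = (a ⬝ᵥ M *ᵥ a) • vecMulVec a a := by
  ext i j
  simp [Matrix.mul_apply, vecMulVec_apply, dotProduct, mulVec, Fin.sum_univ_three]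
  ring

lemma aux_mulVec (s a : Fin 3 → ℝ) :
    vecMulVec s s *ᵥ a = (s ⬝ᵥ a) • s := by
  ext i
  simp [vecMulVec_apply, dotProduct, mulVec, Fin.sum_univ_three]
  ring

lemma sherman_morrison (V : Matrix (Fin 3) (Fin 3) ℝ) (a : Fin 3 → ℝ) (c : ℝ)
    (hc : c ≠ 0) (hVW : V * V⁻¹ = 1)
    (hD : c + a ⬝ᵥ V⁻¹ *ᵥ a ≠ 0) :
    (V + c⁻¹ • vecMulVec a a) *
      (V⁻¹ - (c + a ⬝ᵥ V⁻¹ *ᵥ a)⁻¹ • (V⁻¹ * vecMulVec a a * V⁻¹)) = 1 := by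
  set W := V⁻¹ with hWdef
  set P := vecMulVec a a with hPdef
  set q := a ⬝ᵥ W *ᵥ a with hq
  have h1 : V * (W * P * W) = P * W := by
    rw [← Matrix.mul_assoc, ← Matrix.mul_assoc, hVW, Matrix.one_mul]
  have h2 : P * (W * P * W) = q • (P * W) := by
    calc P * (W * P * W) = (P * W * P) * W := by
          simp only [Matrix.mul_assoc]
      _ = (q • P) * W := by rw [aux_PMP]
      _ = q • (P * W) := by rw [Matrix.smul_mul]
  have expand : (V + c⁻¹ • P) * (W - (c + q)⁻¹ • (W * P * W)) =
      1 - (c + q)⁻¹ • (P * W) + (c⁻¹ • (P * W) - ((c + q)⁻¹ * c⁻¹ * q) • (P * W)) := by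
    rw [Matrix.add_mul, Matrix.mul_sub, Matrix.mul_sub, Matrix.mul_smul, Matrix.mul_smul,
      Matrix.smul_mul, Matrix.smul_mul, hVW, h1, h2, smul_smul, smul_smul]
  rw [expand]
  have hscal : c⁻¹ - (c + q)⁻¹ * c⁻¹ * q - (c + q)⁻¹ = 0 := by
    field_simp
    ring
  have hmod : (1 : Matrix (Fin 3) (Fin 3) ℝ) - (c + q)⁻¹ • (P * W) +
      (c⁻¹ • (P * W) - ((c + q)⁻¹ * c⁻¹ * q) • (P * W)) =
      1 + (c⁻¹ - (c + q)⁻¹ * c⁻¹ * q - (c + q)⁻¹) • (P * W) := by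
    module
  rw [hmod, hscal, zero_smul, add_zero]

/-- Minimizing `a ↦ tr[H (V + F(a,s))⁻¹]` over unit vectors is equivalent to
minimizing the Rayleigh-type quotient
`aᵀ(I − ssᵀ + V⁻¹)a / (aᵀ V⁻¹ H V⁻¹ a)`. -/
theorem trace_inv_iff_rayleigh_quotient
    (s : Fin 3 → ℝ) (hs : Real.sqrt (s ⬝ᵥ s) < 1)
    (V H : Matrix (Fin 3) (Fin 3) ℝ)
    (hV : V.PosDef) (hVsymm : V.IsSymm) (hH : H.PosDef) (hHsymm : H.IsSymm)
    (a a' : Fin 3 → ℝ) (ha : a ⬝ᵥ a = 1) (ha' : a' ⬝ᵥ a' = 1) :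
    (H * (V + fisherMat a s)⁻¹).trace ≤ (H * (V + fisherMat a' s)⁻¹).trace
      ↔ (a ⬝ᵥ ((1 - vecMulVec s s + V⁻¹) *ᵥ a)) / (a ⬝ᵥ ((V⁻¹ * H * V⁻¹) *ᵥ a))
          ≤ (a' ⬝ᵥ ((1 - vecMulVec s s + V⁻¹) *ᵥ a')) / (a' ⬝ᵥ ((V⁻¹ * H * V⁻¹) *ᵥ a')) := by
  have hVdet : IsUnit V.det := isUnit_iff_ne_zero.2 hV.det_pos.ne'
  have hVW : V * V⁻¹ = 1 := V.mul_nonsing_inv hVdet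
  have hW : (V⁻¹)ᵀ = V⁻¹ := by
    rw [Matrix.transpose_nonsing_inv, hVsymm.eq]
  have hss0 : 0 ≤ s ⬝ᵥ s := Finset.sum_nonneg fun i _ => mul_self_nonneg _
  have hss : s ⬝ᵥ s < 1 := by
    have h1 : s ⬝ᵥ s = Real.sqrt (s ⬝ᵥ s) ^ 2 := (Real.sq_sqrt hss0).symm
    rw [h1]
    exact pow_lt_one₀ (Real.sqrt_nonneg _) hs two_ne_zero
  have main : ∀ b : Fin 3 → ℝ, b ⬝ᵥ b = 1 →
      (0 < b ⬝ᵥ ((V⁻¹ * H * V⁻¹) *ᵥ b)) ∧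
      (0 < b ⬝ᵥ ((1 - vecMulVec s s + V⁻¹) *ᵥ b)) ∧
      (H * (V + fisherMat b s)⁻¹).trace =
        (H * V⁻¹).trace -
          (b ⬝ᵥ ((V⁻¹ * H * V⁻¹) *ᵥ b)) / (b ⬝ᵥ ((1 - vecMulVec s s + V⁻¹) *ᵥ b)) := by
    intro b hb
    have hbne : b ≠ 0 := by
      rintro rfl
      simp at hb
    have hbs2 : (b ⬝ᵥ s) ^ 2 ≤ s ⬝ᵥ s := by
      have hcs := Finset.sum_mul_sq_le_sq_mul_sq Finset.univ b s
      have e1 : (∑ i, b i ^ 2) = b ⬝ᵥ b := by simp [dotProduct, sq]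
      have e2 : (∑ i, s i ^ 2) = s ⬝ᵥ s := by simp [dotProduct, sq]
      calc (b ⬝ᵥ s) ^ 2 ≤ (∑ i, b i ^ 2) * (∑ i, s i ^ 2) := hcs
        _ = s ⬝ᵥ s := by rw [e1, e2, hb, one_mul]
    have hc : 0 < 1 - (b ⬝ᵥ s) ^ 2 := by linarith
    have hq : 0 < b ⬝ᵥ V⁻¹ *ᵥ b := by
      have := hV.inv.dotProduct_mulVec_pos hbne
      simpa using this
    have hD0 : 0 < 1 - (b ⬝ᵥ s) ^ 2 + b ⬝ᵥ V⁻¹ *ᵥ b := by linarith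
    have hDval : b ⬝ᵥ ((1 - vecMulVec s s + V⁻¹) *ᵥ b) =
        1 - (b ⬝ᵥ s) ^ 2 + b ⬝ᵥ V⁻¹ *ᵥ b := by
      rw [Matrix.add_mulVec, Matrix.sub_mulVec, Matrix.one_mulVec, dotProduct_add,
        dotProduct_sub, aux_mulVec, dotProduct_smul, hb, dotProduct_comm s b,
        smul_eq_mul, ← sq]
    have hvm : b ᵥ* V⁻¹ = V⁻¹ *ᵥ b := by
      have h := Matrix.vecMul_transpose (V⁻¹) b
      rwa [hW] at h
    have hNval : b ⬝ᵥ ((V⁻¹ * H * V⁻¹) *ᵥ b) =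
        (V⁻¹ *ᵥ b) ⬝ᵥ H *ᵥ (V⁻¹ *ᵥ b) := by
      rw [← Matrix.mulVec_mulVec, ← Matrix.mulVec_mulVec, Matrix.dotProduct_mulVec, hvm]
    have hVbne : V⁻¹ *ᵥ b ≠ 0 := by
      intro h
      apply hbne
      have : V *ᵥ (V⁻¹ *ᵥ b) = b := by
        rw [Matrix.mulVec_mulVec, hVW, Matrix.one_mulVec]
      rw [h, Matrix.mulVec_zero] at this
      exact this.symm
    have hN : 0 < b ⬝ᵥ ((V⁻¹ * H * V⁻¹) *ᵥ b) := by
      rw [hNval]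
      have := hH.dotProduct_mulVec_pos hVbne
      simpa using this
    refine ⟨hN, by rw [hDval]; exact hD0, ?_⟩
    have hinv : (V + fisherMat b s)⁻¹ =
        V⁻¹ - (1 - (b ⬝ᵥ s) ^ 2 + b ⬝ᵥ V⁻¹ *ᵥ b)⁻¹ •
          (V⁻¹ * vecMulVec b b * V⁻¹) := by
      apply Matrix.inv_eq_right_inv
      exact sherman_morrison V b (1 - (b ⬝ᵥ s) ^ 2) hc.ne' hVW hD0.ne'
    have htr : (H * (V⁻¹ * vecMulVec b b * V⁻¹)).trace =
        b ⬝ᵥ ((V⁻¹ * H * V⁻¹) *ᵥ b) := by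
      have e1 : H * (V⁻¹ * vecMulVec b b * V⁻¹) =
          (H * (V⁻¹ * vecMulVec b b)) * V⁻¹ := by
        simp only [Matrix.mul_assoc]
      have e2 : V⁻¹ * (H * (V⁻¹ * vecMulVec b b)) =
          (V⁻¹ * H * V⁻¹) * vecMulVec b b := by
        simp only [Matrix.mul_assoc]
      rw [e1, Matrix.trace_mul_comm, e2, aux_trace]
    rw [hinv, Matrix.mul_sub, Matrix.mul_smul, Matrix.trace_sub, Matrix.trace_smul,
      htr, hDval, smul_eq_mul, div_eq_inv_mul]
  obtain ⟨hN, hD, htr⟩ := main a ha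
  obtain ⟨hN', hD', htr'⟩ := main a' ha'
  rw [htr, htr', sub_le_sub_iff_left, div_le_div_iff₀ hD' hD, div_le_div_iff₀ hN hN']
  constructor <;> intro h <;> nlinarith [h]
end

section
/- Fix s ∈ ℝ³ with ‖s‖ < 1 and define Δ^IF(s, s') = (1/2)(1 − s·s' − √(1 − ‖s‖²)·√(1 − ‖s'‖²)) for s' in the open unit ball of ℝ³. Then, as s' → s, Δ^IF(s, s') = (s' − s)ᵀ H^IF(s) (s' − s) + O(‖s' − s‖³), where H^IF(s) = (1/4)(I + s sᵀ / (1 − ‖s‖²)); that is, the difference Δ^IF(s,s') − (s' − s)ᵀ H^IF(s)(s' − s) is big-O of ‖s' − s‖³ as s' → s. -/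
open Matrix Asymptotics Filter

lemma sqrt_taylor_aux (t : ℝ) (ht : |t| ≤ 1/2) :
    |Real.sqrt (1 - t) - (1 - t/2 - t^2/8)| ≤ |t|^3 := by
  obtain ⟨ht1, ht2⟩ := abs_le.mp ht
  have h1 : (0:ℝ) ≤ 1 - t := by linarith
  set y := Real.sqrt (1-t) with hy
  have hy0 : 0 ≤ y := Real.sqrt_nonneg _
  have hy2 : y^2 = 1 - t := Real.sq_sqrt h1
  set p : ℝ := 1 - t/2 - t^2/8 with hp
  have ht2' : t^2 ≤ 1/4 := by nlinarith
  have hpge : (23:ℝ)/32 ≤ p := by rw [hp]; nlinarith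
  clear_value y p
  have hpos : (0:ℝ) < y + p := by linarith
  have key : (y - p) * (y + p) = -(t^3/8 + t^4/64) := by rw [hp]; nlinarith [hy2]
  have h2 : |y - p| * (y + p) = |t^3/8 + t^4/64| := by
    rw [← abs_of_pos hpos, ← abs_mul, key, abs_neg]
  have habs : |t^3/8 + t^4/64| ≤ |t|^3 * (23/32) := by
    calc |t^3/8 + t^4/64| ≤ |t^3|/8 + |t^4|/64 := by
          calc |t^3/8 + t^4/64| ≤ |t^3/8| + |t^4/64| := abs_add_le _ _
          _ = |t^3|/8 + |t^4|/64 := by rw [abs_div, abs_div]; norm_num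
      _ = |t|^3/8 + |t|^3 * |t|/64 := by rw [abs_pow, abs_pow]; ring
      _ ≤ |t|^3/8 + |t|^3 * (1/2)/64 := by
          have : (0:ℝ) ≤ |t|^3 := by positivity
          nlinarith
      _ ≤ |t|^3 * (23/32) := by nlinarith [pow_nonneg (abs_nonneg t) 3]
  have h3 : |y - p| * (y + p) ≤ (|t|^3) * (y + p) := by
    rw [h2]
    calc |t^3/8 + t^4/64| ≤ |t|^3 * (23/32) := habs
      _ ≤ |t|^3 * (y + p) := by
          have : (0:ℝ) ≤ |t|^3 := by positivity
          nlinarith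
  exact le_of_mul_le_mul_right h3 hpos

lemma tailcalc (a sig nu r t : ℝ) (ha : 0 < a) (hnu0 : 0 ≤ nu) (hr0 : 0 ≤ r)
    (hr2 : r^2 = nu) (hr1 : r ≤ 1) (hsl : -r ≤ sig) (hsu : sig ≤ r)
    (htdef : t = (2*sig+nu)/a)
    (hE : |Real.sqrt (1-t) - (1 - t/2 - t^2/8)| ≤ |t|^3)
    (ht27 : |t|^3 ≤ 27*r^3/a^3) :
    |1/2 * (1 - ((1-a) + sig) - a * Real.sqrt (1-t)) - 1/4*(nu + a⁻¹*sig^2)|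
      ≤ (1/a + 14/a^2) * |r^3| := by
  set y := Real.sqrt (1-t) with hy
  have hEq : 1/2 * (1 - ((1-a) + sig) - a * y) - 1/4*(nu + a⁻¹*sig^2)
      = nu*(4*sig+nu)/(16*a) - a/2 * (y - (1 - t/2 - t^2/8)) := by
    rw [htdef]; field_simp; ring
  rw [hEq]
  have h45 : |4*sig+nu| ≤ 5*r := abs_le.2 ⟨by nlinarith, by nlinarith⟩
  have hX : |nu*(4*sig+nu)/(16*a)| ≤ 5*r^3/(16*a) := by
    rw [abs_div, abs_of_pos (by positivity : (0:ℝ) < 16*a), abs_mul, abs_of_nonneg hnu0]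
    apply div_le_div_of_nonneg_right ?_ (by positivity)
    nlinarith [abs_nonneg (4*sig+nu)]
  have hY : |a/2 * (y - (1 - t/2 - t^2/8))| ≤ a/2 * (27*r^3/a^3) := by
    rw [abs_mul, abs_of_pos (by positivity : (0:ℝ) < a/2)]
    exact mul_le_mul_of_nonneg_left (hE.trans ht27) (by positivity)
  calc |nu*(4*sig+nu)/(16*a) - a/2 * (y - (1 - t/2 - t^2/8))|
      ≤ |nu*(4*sig+nu)/(16*a)| + |a/2 * (y - (1 - t/2 - t^2/8))| := abs_sub _ _
    _ ≤ 5*r^3/(16*a) + a/2 * (27*r^3/a^3) := add_le_add hX hY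
    _ ≤ (1/a + 14/a^2) * |r^3| := by
        rw [abs_of_nonneg (by positivity : (0:ℝ) ≤ r^3)]
        have key : (1/a + 14/a^2) * r^3 - (5*r^3/(16*a) + a/2*(27*r^3/a^3))
            = r^3*(11*a + 8)/(16*a^2) := by field_simp; ring
        nlinarith [key, div_nonneg (mul_nonneg (pow_nonneg hr0 3)
          (by positivity : (0:ℝ) ≤ 11*a+8)) (by positivity : (0:ℝ) ≤ 16*a^2)]

set_option maxHeartbeats 2000000 in
/-- Second-order Taylor expansion of the infidelity around the true Bloch
vector: `Δ^IF(s,s') − (s'−s)ᵀ H^IF(s) (s'−s) = O(‖s'−s‖³)` as `s' → s`,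
where `Δ^IF(s,s') = ½(1 − s·s' − √(1−‖s‖²)√(1−‖s'‖²))` and
`H^IF(s) = ¼(I + ssᵀ/(1−‖s‖²))`. -/
theorem infidelity_quadratic_approximation
    (s : Fin 3 → ℝ) (hs : Real.sqrt (s ⬝ᵥ s) < 1) :
    (fun s' : Fin 3 → ℝ =>
        (1 / 2) * (1 - s ⬝ᵥ s' - Real.sqrt (1 - s ⬝ᵥ s) * Real.sqrt (1 - s' ⬝ᵥ s'))
          - (s' - s) ⬝ᵥ
              (((1 / 4 : ℝ) • ((1 : Matrix (Fin 3) (Fin 3) ℝ)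
                  + (1 - s ⬝ᵥ s)⁻¹ • vecMulVec s s)) *ᵥ (s' - s)))
      =O[nhds s] (fun s' : Fin 3 → ℝ => Real.sqrt ((s' - s) ⬝ᵥ (s' - s)) ^ 3) := by
  have hssexp : s ⬝ᵥ s = s 0 * s 0 + s 1 * s 1 + s 2 * s 2 := by
    simp [dotProduct, Fin.sum_univ_three]
  have hss0 : 0 ≤ s ⬝ᵥ s := by rw [hssexp]; nlinarith [sq_nonneg (s 0), sq_nonneg (s 1), sq_nonneg (s 2)]
  have hss1 : s ⬝ᵥ s < 1 := by nlinarith [Real.sq_sqrt hss0, Real.sqrt_nonneg (s ⬝ᵥ s)]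
  set a := 1 - s ⬝ᵥ s with hadef
  have ha : 0 < a := by rw [hadef]; linarith
  rw [Asymptotics.isBigO_iff]
  refine ⟨1/a + 14/a^2, ?_⟩
  rw [Metric.eventually_nhds_iff]
  have hδ0 : (0:ℝ) < min 1 (a/6) := by positivity
  refine ⟨min 1 (a/6) / 2, by positivity, fun s' hd => ?_⟩
  simp only [Real.norm_eq_abs]
  -- basic quantities
  set v : Fin 3 → ℝ := s' - s with hv
  have hvi : ∀ i, v i = s' i - s i := fun i => rfl
  set nu := v ⬝ᵥ v with hnudef
  set sig := s ⬝ᵥ v with hsigdef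
  have hnuexp : nu = v 0 * v 0 + v 1 * v 1 + v 2 * v 2 := by
    rw [hnudef]; simp [dotProduct, Fin.sum_univ_three]
  have hsigexp : sig = s 0 * v 0 + s 1 * v 1 + s 2 * v 2 := by
    rw [hsigdef]; simp [dotProduct, Fin.sum_univ_three]
  have hnu0 : 0 ≤ nu := by rw [hnuexp]; nlinarith [sq_nonneg (v 0), sq_nonneg (v 1), sq_nonneg (v 2)]
  set r := Real.sqrt nu with hrdef
  have hr0 : 0 ≤ r := Real.sqrt_nonneg _
  have hr2 : r^2 = nu := Real.sq_sqrt hnu0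
  -- rewrite the dot products appearing in the goal
  have e1 : s ⬝ᵥ s' = (1 - a) + sig := by
    rw [hsigexp, hadef, hssexp]
    simp [dotProduct, Fin.sum_univ_three, hvi]
    ring
  have e2 : (1:ℝ) - s' ⬝ᵥ s' = a - (2*sig + nu) := by
    rw [hsigexp, hnuexp, hadef, hssexp]
    simp [dotProduct, Fin.sum_univ_three, hvi]
    ring
  have e3 : v ⬝ᵥ (((1 / 4 : ℝ) • ((1 : Matrix (Fin 3) (Fin 3) ℝ)
      + a⁻¹ • vecMulVec s s)) *ᵥ v) = 1/4 * (nu + a⁻¹ * sig^2) := by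
    rw [hnuexp, hsigexp]
    simp [Matrix.mulVec, dotProduct, Fin.sum_univ_three, Matrix.vecMulVec_apply,
      Matrix.one_apply, Matrix.add_apply, Matrix.smul_apply, smul_eq_mul]
    ring
  -- distance bounds
  have hdist : ∀ i, |v i| ≤ dist s' s := by
    intro i
    have := dist_le_pi_dist s' s i
    rwa [Real.dist_eq, ← hvi i] at this
  clear_value v nu sig r
  obtain ⟨d, hddef⟩ : ∃ d, d = dist s' s := ⟨_, rfl⟩
  rw [← hddef] at hd hdist
  have hdn : 0 ≤ d := hddef ▸ dist_nonneg
  have hnud : nu ≤ 3 * d^2 := by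
    have h0 : v 0 * v 0 ≤ d^2 := by nlinarith [hdist 0, abs_nonneg (v 0), sq_abs (v 0)]
    have h1 : v 1 * v 1 ≤ d^2 := by nlinarith [hdist 1, abs_nonneg (v 1), sq_abs (v 1)]
    have h2 : v 2 * v 2 ≤ d^2 := by nlinarith [hdist 2, abs_nonneg (v 2), sq_abs (v 2)]
    rw [hnuexp]; linarith
  -- Cauchy–Schwarz
  have hsig2 : sig^2 ≤ nu := by
    rw [hsigexp, hnuexp]
    have hle : (s 0 * v 0 + s 1 * v 1 + s 2 * v 2)^2
        ≤ (s 0 * s 0 + s 1 * s 1 + s 2 * s 2) * (v 0 * v 0 + v 1 * v 1 + v 2 * v 2) := by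
      nlinarith [sq_nonneg (s 0 * v 1 - s 1 * v 0), sq_nonneg (s 0 * v 2 - s 2 * v 0),
        sq_nonneg (s 1 * v 2 - s 2 * v 1)]
    have hnn : 0 ≤ v 0 * v 0 + v 1 * v 1 + v 2 * v 2 := by rw [← hnuexp]; exact hnu0
    nlinarith [hss1, hssexp]
  -- smallness of r
  have hrsmall : r ≤ min 1 (a/6) := by
    have hdhalf : d < min 1 (a/6) / 2 := hd
    have hsq : r^2 < (min 1 (a/6))^2 := by
      rw [hr2]
      nlinarith [hnud, hdn, hδ0]
    nlinarith [hr0, hδ0]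
  have hr1 : r ≤ 1 := hrsmall.trans (min_le_left _ _)
  have hra : r ≤ a/6 := hrsmall.trans (min_le_right _ _)
  have hsigr : |sig| ≤ r := by nlinarith [sq_abs sig, abs_nonneg sig]
  obtain ⟨hsl, hsu⟩ := abs_le.mp hsigr
  have hu3 : |2*sig + nu| ≤ 3*r := abs_le.2 ⟨by nlinarith, by nlinarith⟩
  set t := (2*sig + nu)/a with htdef
  have ht : |t| ≤ 1/2 := by
    rw [htdef, abs_div, abs_of_pos ha, div_le_iff₀ ha]
    nlinarith
  have hE : |Real.sqrt (1-t) - (1 - t/2 - t^2/8)| ≤ |t|^3 := sqrt_taylor_aux t ht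
  have ht27 : |t|^3 ≤ 27*r^3/a^3 := by
    rw [htdef, abs_div, abs_of_pos ha, div_pow]
    have h1 : |2*sig + nu|^3 ≤ 27*r^3 := by
      have := pow_le_pow_left₀ (abs_nonneg (2*sig + nu)) hu3 3
      nlinarith [this]
    exact div_le_div_of_nonneg_right h1 (by positivity) |>.trans_eq rfl
  -- the sqrt product
  have e5 : Real.sqrt a * Real.sqrt (a - (2*sig + nu)) = a * Real.sqrt (1 - t) := by
    have h5a : a - (2*sig + nu) = a * (1 - t) := by rw [htdef]; field_simp
    rw [h5a, Real.sqrt_mul ha.le, ← mul_assoc, Real.mul_self_sqrt ha.le]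
  -- rewrite the goal
  rw [e1, show (1:ℝ) - s' ⬝ᵥ s' = a - (2*sig + nu) from e2, e3, e5]
  exact tailcalc a sig nu r t ha hnu0 hr0 hr2 hr1 hsl hsu htdef hE ht27
end

section
/- Let X and Y be finite sets, k ∈ ℕ, θ₀ ∈ ℝᵏ. Let p : ℝᵏ → X → ℝ with p(θ₀)(x) > 0 for all x, Σ_x p(θ)(x) = 1 for all θ, and θ ↦ p(θ)(x) differentiable at θ₀; and for each x ∈ X let q_x : ℝᵏ → Y → ℝ with q_x(θ₀)(y) > 0 for all y, Σ_y q_x(θ)(y) = 1 for all θ, and θ ↦ q_x(θ)(y) differentiable at θ₀. Define the joint distribution P(θ)(x,y) = p(θ)(x) q_x(θ)(y) on X × Y. Then the Fisher matrix of P at θ₀ decomposes as Fisher(P) = Fisher(p) + Σ_x p(θ₀)(x) Fisher(q_x), where for a finite family r the Fisher matrix at θ₀ is Σ_z (∇_θ r(θ)(z)|_{θ₀})(∇_θ r(θ)(z)|_{θ₀})ᵀ / r(θ₀)(z). -/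
open Matrix

/-- The Fisher matrix at `θ₀` of a finite family of probability
distributions `r : ℝᵏ → Z → ℝ`:
`Σ_z (∇_θ r(θ)(z)|_{θ₀})(∇_θ r(θ)(z)|_{θ₀})ᵀ / r(θ₀)(z)`. -/
noncomputable def fisherOf {k : ℕ} {Z : Type*} [Fintype Z]
    (r : (Fin k → ℝ) → Z → ℝ) (θ₀ : Fin k → ℝ) : Matrix (Fin k) (Fin k) ℝ :=
  ∑ z, (r θ₀ z)⁻¹ •
    Matrix.vecMulVec (fun i => fderiv ℝ (fun θ => r θ z) θ₀ (Pi.single i 1))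
      (fun i => fderiv ℝ (fun θ => r θ z) θ₀ (Pi.single i 1))

lemma sum_fderiv_eq_zero' {k : ℕ} {Y : Type*} [Fintype Y] (θ₀ : Fin k → ℝ)
    (q : (Fin k → ℝ) → Y → ℝ) (hqsum : ∀ θ, ∑ y, q θ y = 1)
    (hqdiff : ∀ y, DifferentiableAt ℝ (fun θ => q θ y) θ₀) (w : Fin k → ℝ) :
    ∑ y, fderiv ℝ (fun θ => q θ y) θ₀ w = 0 := by
  have h : fderiv ℝ (fun θ => ∑ y, q θ y) θ₀ = ∑ y, fderiv ℝ (fun θ => q θ y) θ₀ :=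
    fderiv_fun_sum (fun y _ => hqdiff y)
  have h2 : fderiv ℝ (fun θ : Fin k → ℝ => ∑ y, q θ y) θ₀ = 0 := by
    have : (fun θ : Fin k → ℝ => ∑ y, q θ y) = fun _ => (1:ℝ) := funext hqsum
    rw [this]; exact fderiv_const_apply 1
  have := congrArg (fun L : (Fin k → ℝ) →L[ℝ] ℝ => L w) (h.symm.trans h2)
  simpa [ContinuousLinearMap.sum_apply] using this


/-- Decomposition of the Fisher matrix of a two-stage (adaptive) experiment:
for the joint distribution `P(θ)(x,y) = p(θ)(x) q_x(θ)(y)`,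
`Fisher(P) = Fisher(p) + Σ_x p(θ₀)(x) Fisher(q_x)`. -/
theorem fisher_two_stage_decomposition
    {k : ℕ} {X Y : Type*} [Fintype X] [Fintype Y]
    (θ₀ : Fin k → ℝ)
    (p : (Fin k → ℝ) → X → ℝ)
    (hppos : ∀ x, 0 < p θ₀ x)
    (hpsum : ∀ θ, ∑ x, p θ x = 1)
    (hpdiff : ∀ x, DifferentiableAt ℝ (fun θ => p θ x) θ₀)
    (q : X → (Fin k → ℝ) → Y → ℝ)
    (hqpos : ∀ x y, 0 < q x θ₀ y)
    (hqsum : ∀ x θ, ∑ y, q x θ y = 1)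
    (hqdiff : ∀ x y, DifferentiableAt ℝ (fun θ => q x θ y) θ₀) :
    fisherOf (fun θ (z : X × Y) => p θ z.1 * q z.1 θ z.2) θ₀
      = fisherOf p θ₀ + ∑ x, p θ₀ x • fisherOf (q x) θ₀ := by
  ext i j
  simp only [fisherOf, Matrix.sum_apply, Matrix.smul_apply, Matrix.add_apply,
    Matrix.vecMulVec_apply, smul_eq_mul]
  rw [show (Finset.univ : Finset (X × Y)) = Finset.univ ×ˢ Finset.univ from rfl, Finset.sum_product]
  rw [← Finset.sum_add_distrib]
  refine Finset.sum_congr rfl (fun x _ => ?_)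
  set a := p θ₀ x with ha
  set u : Fin k → ℝ := fun i => fderiv ℝ (fun θ => p θ x) θ₀ (Pi.single i 1) with hu
  set v : Y → Fin k → ℝ := fun y i => fderiv ℝ (fun θ => q x θ y) θ₀ (Pi.single i 1) with hv
  have hder : ∀ y (i : Fin k),
      fderiv ℝ (fun θ => p θ x * q x θ y) θ₀ (Pi.single i 1)
        = a * v y i + q x θ₀ y * u i := by
    intro y i
    rw [fderiv_fun_mul (hpdiff x) (hqdiff x y)]
    simp [hv, hu, ha, mul_comm]
  have hvsum : ∀ i : Fin k, ∑ y, v y i = 0 := fun i =>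
    sum_fderiv_eq_zero' θ₀ (q x) (hqsum x) (hqdiff x) (Pi.single i 1)
  have ha0 : a ≠ 0 := (hppos x).ne'
  calc ∑ y, ((p θ₀ x * q x θ₀ y)⁻¹ *
        (fderiv ℝ (fun θ => p θ x * q x θ y) θ₀ (Pi.single i 1) *
         fderiv ℝ (fun θ => p θ x * q x θ y) θ₀ (Pi.single j 1)))
      = ∑ y, (a * ((q x θ₀ y)⁻¹ * (v y i * v y j))
          + (v y i * u j + u i * v y j + (q x θ₀ y) * (a⁻¹ * (u i * u j)))) := by
        refine Finset.sum_congr rfl (fun y _ => ?_)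
        rw [hder y i, hder y j]
        have hb0 : q x θ₀ y ≠ 0 := (hqpos x y).ne'
        have hp0 : p θ₀ x ≠ 0 := (hppos x).ne'
        field_simp
        ring
    _ = a * ∑ y, (q x θ₀ y)⁻¹ * (v y i * v y j)
        + ((∑ y, v y i) * u j + u i * (∑ y, v y j) + (∑ y, q x θ₀ y) * (a⁻¹ * (u i * u j))) := by
        rw [Finset.sum_add_distrib, Finset.mul_sum]
        congr 1
        rw [Finset.sum_add_distrib, Finset.sum_add_distrib, Finset.sum_mul,
          Finset.mul_sum, Finset.sum_mul]
    _ = a⁻¹ * (u i * u j) + a * ∑ y, (q x θ₀ y)⁻¹ * (v y i * v y j) := by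
        rw [hvsum i, hvsum j, hqsum x θ₀]
        ring
end
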